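/- Let π : P → H be a surjective morphism of Hopf algebras over a field k, Δ_R := (id ⊗ π) ∘ Δ_P, M := { x ∈ P : Δ_R(x) = x ⊗ 1 }, and V := M ∩ ker ε_P. Then the k-linear map Δ_V(v) := Σ v₍₂₎ ⊗ π(S(v₍₁₎)) maps V into V ⊗ H, and it makes V a right H-comodule: (Δ_V ⊗ id) ∘ Δ_V = (id ⊗ Δ_H) ∘ Δ_V and (id ⊗ ε_H) ∘ Δ_V = id on V. -/

import Mathlib

set_option maxHeartbeats 1000000
set_option synthInstance.maxHeartbeats 400000

open TensorProduct Coalgebra LinearMap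

noncomputable section Aux

variable {R A : Type*} [CommRing R] [Ring A] [HopfAlgebra R A]

lemma repr_smul_right {a : A} {ι : Type*} (r : Coalgebra.Repr R a ι) :
    ∑ i ∈ r.index, Coalgebra.counit (R := R) (r.left i) • r.right i = a := by
  have h := congrArg (TensorProduct.lid R A) (Coalgebra.sum_counit_tmul_eq r)
  rw [map_sum] at h
  simp only [TensorProduct.lid_tmul] at h
  simpa using h

lemma repr_smul_left {a : A} {ι : Type*} (r : Coalgebra.Repr R a ι) :
    ∑ i ∈ r.index, Coalgebra.counit (R := R) (r.right i) • r.left i = a := by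
  have h := congrArg (TensorProduct.rid R A) (Coalgebra.sum_tmul_counit_eq r)
  rw [map_sum] at h
  simp only [TensorProduct.rid_tmul] at h
  simpa using h

lemma counit_antipode' (a : A) :
    Coalgebra.counit (R := R) (HopfAlgebra.antipode (R := R) (A := A) a)
      = Coalgebra.counit (R := R) a := by
  have h1 := HopfAlgebra.sum_antipode_mul_eq_algebraMap_counit (R := R) (ℛ R a)
  have h2 := congrArg (Coalgebra.counit (R := R) (A := A)) h1
  rw [map_sum] at h2
  simp only [Bialgebra.counit_mul, Bialgebra.counit_algebraMap] at h2
  calc Coalgebra.counit (R := R) (HopfAlgebra.antipode (R := R) (A := A) a)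
      = Coalgebra.counit (R := R) (HopfAlgebra.antipode (R := R) (A := A)
          (∑ i ∈ (ℛ R a).index,
            Coalgebra.counit (R := R) ((ℛ R a).right i) • (ℛ R a).left i)) := by
        rw [repr_smul_left]
    _ = ∑ i ∈ (ℛ R a).index, Coalgebra.counit (R := R)
          (HopfAlgebra.antipode (R := R) (A := A) ((ℛ R a).left i))
            * Coalgebra.counit (R := R) ((ℛ R a).right i) := by
        rw [map_sum, map_sum]
        exact Finset.sum_congr rfl fun i _ => by rw [map_smul, map_smul, smul_eq_mul, mul_comm]
    _ = Coalgebra.counit (R := R) a := h2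

section Conv

variable {B : Type*} [Ring B] [Algebra R B]

/-- Convolution product on `Hom(A, B)`. -/
noncomputable def conv (f g : A →ₗ[R] B) : A →ₗ[R] B :=
  LinearMap.mul' R B ∘ₗ TensorProduct.map f g ∘ₗ Coalgebra.comul

lemma conv_repr (f g : A →ₗ[R] B) {a : A} {ι : Type*} (r : Coalgebra.Repr R a ι) :
    conv f g a = ∑ i ∈ r.index, f (r.left i) * g (r.right i) := by
  simp only [conv, LinearMap.comp_apply, ← r.eq, map_sum, TensorProduct.map_tmul,
    LinearMap.mul'_apply]

/-- The convolution unit. -/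
noncomputable def convUnit : A →ₗ[R] B :=
  Algebra.linearMap R B ∘ₗ Coalgebra.counit

lemma conv_unit_left (f : A →ₗ[R] B) : conv convUnit f = f := by
  refine LinearMap.ext fun a => ?_
  rw [conv_repr _ _ (ℛ R a)]
  calc ∑ i ∈ (ℛ R a).index, convUnit (R := R) ((ℛ R a).left i) * f ((ℛ R a).right i)
      = ∑ i ∈ (ℛ R a).index,
          f (Coalgebra.counit (R := R) ((ℛ R a).left i) • (ℛ R a).right i) := by
        refine Finset.sum_congr rfl fun i _ => ?_
        rw [map_smul, convUnit, LinearMap.comp_apply, Algebra.linearMap_apply,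
          ← Algebra.smul_def]
    _ = f a := by rw [← map_sum, repr_smul_right]

lemma conv_unit_right (f : A →ₗ[R] B) : conv f convUnit = f := by
  refine LinearMap.ext fun a => ?_
  rw [conv_repr _ _ (ℛ R a)]
  calc ∑ i ∈ (ℛ R a).index, f ((ℛ R a).left i) * convUnit (R := R) ((ℛ R a).right i)
      = ∑ i ∈ (ℛ R a).index,
          f (Coalgebra.counit (R := R) ((ℛ R a).right i) • (ℛ R a).left i) := by
        refine Finset.sum_congr rfl fun i _ => ?_
        rw [map_smul, convUnit, LinearMap.comp_apply, Algebra.linearMap_apply,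
          ← Algebra.commutes, ← Algebra.smul_def]
    _ = f a := by rw [← map_sum, repr_smul_left]

lemma conv_assoc (f g h : A →ₗ[R] B) : conv (conv f g) h = conv f (conv g h) := by
  refine LinearMap.ext fun a => ?_
  set r := ℛ R a with hr
  have E := Coalgebra.sum_tmul_tmul_eq r (fun i => ℛ R (r.left i)) (fun i => ℛ R (r.right i))
  have E2 := congrArg
    (LinearMap.mul' R B ∘ₗ TensorProduct.map f (LinearMap.mul' R B ∘ₗ TensorProduct.map g h)) E
  simp only [map_sum, LinearMap.comp_apply, TensorProduct.map_tmul, LinearMap.mul'_apply] at E2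
  calc conv (conv f g) h a
      = ∑ i ∈ r.index, conv f g (r.left i) * h (r.right i) := conv_repr _ _ r
    _ = ∑ i ∈ r.index, ∑ j ∈ (ℛ R (r.left i)).index,
          f ((ℛ R (r.left i)).left j) * (g ((ℛ R (r.left i)).right j) * h (r.right i)) := by
        refine Finset.sum_congr rfl fun i _ => ?_
        rw [conv_repr _ _ (ℛ R (r.left i)), Finset.sum_mul]
        exact Finset.sum_congr rfl fun j _ => mul_assoc _ _ _
    _ = ∑ i ∈ r.index, ∑ j ∈ (ℛ R (r.right i)).index,
          f (r.left i) * (g ((ℛ R (r.right i)).left j) * h ((ℛ R (r.right i)).right j)) := E2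
    _ = ∑ i ∈ r.index, f (r.left i) * conv g h (r.right i) := by
        refine Finset.sum_congr rfl fun i _ => ?_
        rw [conv_repr _ _ (ℛ R (r.right i)), Finset.mul_sum]
    _ = conv f (conv g h) a := (conv_repr _ _ r).symm

lemma conv_comul_antipode :
    conv (Coalgebra.comul (R := R) (A := A))
        (Coalgebra.comul ∘ₗ HopfAlgebra.antipode (R := R) (A := A))
      = (convUnit : A →ₗ[R] A ⊗[R] A) := by
  refine LinearMap.ext fun a => ?_
  rw [conv_repr _ _ (ℛ R a)]
  calc ∑ i ∈ (ℛ R a).index, Coalgebra.comul (R := R) ((ℛ R a).left i) *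
        (Coalgebra.comul ∘ₗ HopfAlgebra.antipode (R := R) (A := A)) ((ℛ R a).right i)
      = ∑ i ∈ (ℛ R a).index, Coalgebra.comul (R := R)
          ((ℛ R a).left i * HopfAlgebra.antipode (R := R) ((ℛ R a).right i)) := by
        refine Finset.sum_congr rfl fun i _ => ?_
        rw [LinearMap.comp_apply, Bialgebra.comul_mul]
    _ = Coalgebra.comul (R := R)
          (∑ i ∈ (ℛ R a).index,
            (ℛ R a).left i * HopfAlgebra.antipode (R := R) ((ℛ R a).right i)) := by
        rw [map_sum]
    _ = convUnit (R := R) a := by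
        rw [HopfAlgebra.sum_mul_antipode_eq_algebraMap_counit, Bialgebra.comul_algebraMap]
        rfl

lemma inner_collapse (w : A) {y : A} {ι : Type*} (r : Coalgebra.Repr R y ι)
    (c : (i : r.ι) → Coalgebra.Repr R (r.right i) (A × A)) :
    ∑ i ∈ r.index, ∑ p ∈ (c i).index,
      (HopfAlgebra.antipode (R := R) (r.left i) * (c i).left p) ⊗ₜ[R] (w * (c i).right p)
      = (1 : A) ⊗ₜ[R] (w * y) := by
  have E := Coalgebra.sum_tmul_tmul_eq r (fun i => ℛ R (r.left i)) c
  have E2 := congrArg (TensorProduct.map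
      (LinearMap.mul' R A ∘ₗ
        TensorProduct.map (HopfAlgebra.antipode (R := R) (A := A)) LinearMap.id)
      (LinearMap.mulLeft R w)
    ∘ₗ (TensorProduct.assoc R A A A).symm.toLinearMap) E
  simp only [map_sum, LinearMap.comp_apply, LinearEquiv.coe_coe, TensorProduct.assoc_symm_tmul,
    TensorProduct.map_tmul, LinearMap.mul'_apply, LinearMap.id_coe, id_eq,
    LinearMap.mulLeft_apply] at E2
  rw [← E2]
  calc ∑ i ∈ r.index, ∑ j ∈ (ℛ R (r.left i)).index,
        (HopfAlgebra.antipode (R := R) ((ℛ R (r.left i)).left j) * (ℛ R (r.left i)).right j)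
          ⊗ₜ[R] (w * r.right i)
      = ∑ i ∈ r.index,
          (algebraMap R A (Coalgebra.counit (R := R) (r.left i))) ⊗ₜ[R] (w * r.right i) := by
        refine Finset.sum_congr rfl fun i _ => ?_
        rw [← TensorProduct.sum_tmul, HopfAlgebra.sum_antipode_mul_eq_algebraMap_counit]
    _ = ∑ i ∈ r.index,
          (1 : A) ⊗ₜ[R] (Coalgebra.counit (R := R) (r.left i) • (w * r.right i)) := by
        refine Finset.sum_congr rfl fun i _ => ?_
        rw [Algebra.algebraMap_eq_smul_one, TensorProduct.smul_tmul]
    _ = (1 : A) ⊗ₜ[R] (w * y) := by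
        rw [← TensorProduct.tmul_sum]
        congr 1
        calc ∑ i ∈ r.index, Coalgebra.counit (R := R) (r.left i) • (w * r.right i)
            = ∑ i ∈ r.index, w * (Coalgebra.counit (R := R) (r.left i) • r.right i) :=
              Finset.sum_congr rfl fun i _ => (mul_smul_comm _ _ _).symm
          _ = w * y := by rw [← Finset.mul_sum, repr_smul_right]

/-- `a ↦ ∑ S(a₂) ⊗ S(a₁)`. -/
noncomputable def antiComul : A →ₗ[R] A ⊗[R] A :=
  (TensorProduct.comm R A A).toLinearMap ∘ₗ
    TensorProduct.map (HopfAlgebra.antipode (R := R)) (HopfAlgebra.antipode (R := R)) ∘ₗ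
    Coalgebra.comul

lemma antiComul_repr {a : A} {ι : Type*} (r : Coalgebra.Repr R a ι) :
    antiComul (R := R) a = ∑ i ∈ r.index,
      HopfAlgebra.antipode (R := R) (r.right i) ⊗ₜ[R]
        HopfAlgebra.antipode (R := R) (r.left i) := by
  simp only [antiComul, LinearMap.comp_apply, ← r.eq, map_sum, TensorProduct.map_tmul,
    LinearEquiv.coe_coe, TensorProduct.comm_tmul]

lemma conv_antiComul_comul :
    conv (antiComul (R := R) (A := A)) Coalgebra.comul = convUnit := by
  refine LinearMap.ext fun a => ?_
  set r := ℛ R a with hr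
  set b : (i : r.ι) → Coalgebra.Repr R (r.left i) (A × A) := fun i => ℛ R (r.left i) with hb
  set c : (i : r.ι) → Coalgebra.Repr R (r.right i) (A × A) := fun i => ℛ R (r.right i) with hc
  have E := Coalgebra.sum_tmul_tmul_eq r b c
  have E2 := congrArg (LinearMap.mul' R (A ⊗[R] A) ∘ₗ
      TensorProduct.map
        ((TensorProduct.comm R A A).toLinearMap ∘ₗ
          TensorProduct.map (HopfAlgebra.antipode (R := R)) (HopfAlgebra.antipode (R := R)))
        (Coalgebra.comul (R := R) (A := A))
    ∘ₗ (TensorProduct.assoc R A A A).symm.toLinearMap) E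
  simp only [map_sum, LinearMap.comp_apply, LinearEquiv.coe_coe, TensorProduct.assoc_symm_tmul,
    TensorProduct.map_tmul, TensorProduct.comm_tmul, LinearMap.mul'_apply] at E2
  calc conv (antiComul (R := R) (A := A)) Coalgebra.comul a
      = ∑ i ∈ r.index, antiComul (R := R) (r.left i) * Coalgebra.comul (r.right i) :=
        conv_repr _ _ r
    _ = ∑ i ∈ r.index, ∑ j ∈ (b i).index,
          (HopfAlgebra.antipode (R := R) ((b i).right j) ⊗ₜ[R]
            HopfAlgebra.antipode (R := R) ((b i).left j)) * Coalgebra.comul (r.right i) := by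
        refine Finset.sum_congr rfl fun i _ => ?_
        rw [antiComul_repr (b i), Finset.sum_mul]
    _ = ∑ i ∈ r.index, ∑ p ∈ (c i).index,
          (HopfAlgebra.antipode (R := R) ((c i).left p) ⊗ₜ[R]
            HopfAlgebra.antipode (R := R) (r.left i)) * Coalgebra.comul ((c i).right p) := E2
    _ = ∑ i ∈ r.index, ∑ p ∈ (c i).index, ∑ q ∈ (ℛ R ((c i).right p)).index,
          (HopfAlgebra.antipode (R := R) ((c i).left p) * (ℛ R ((c i).right p)).left q) ⊗ₜ[R]
            (HopfAlgebra.antipode (R := R) (r.left i) * (ℛ R ((c i).right p)).right q) := by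
        refine Finset.sum_congr rfl fun i _ => Finset.sum_congr rfl fun p _ => ?_
        rw [← (ℛ R ((c i).right p)).eq, Finset.mul_sum]
        exact Finset.sum_congr rfl fun q _ => Algebra.TensorProduct.tmul_mul_tmul _ _ _ _
    _ = ∑ i ∈ r.index,
          (1 : A) ⊗ₜ[R] (HopfAlgebra.antipode (R := R) (r.left i) * r.right i) := by
        refine Finset.sum_congr rfl fun i _ => ?_
        exact inner_collapse (HopfAlgebra.antipode (R := R) (r.left i)) (c i)
          (fun p => ℛ R ((c i).right p))
    _ = (1 : A) ⊗ₜ[R] (algebraMap R A (Coalgebra.counit (R := R) a)) := by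
        rw [← TensorProduct.tmul_sum, HopfAlgebra.sum_antipode_mul_eq_algebraMap_counit]
    _ = convUnit (R := R) a := by
        rw [convUnit, LinearMap.comp_apply, Algebra.linearMap_apply,
          Algebra.TensorProduct.algebraMap_apply, Algebra.algebraMap_eq_smul_one,
          TensorProduct.smul_tmul, ← Algebra.algebraMap_eq_smul_one]

/-- The antipode is an anti-coalgebra morphism: `Δ ∘ S = τ ∘ (S ⊗ S) ∘ Δ`. -/
lemma comul_comp_antipode :
    Coalgebra.comul (R := R) (A := A) ∘ₗ HopfAlgebra.antipode (R := R)
      = antiComul := by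
  calc Coalgebra.comul (R := R) (A := A) ∘ₗ HopfAlgebra.antipode (R := R)
      = conv convUnit (Coalgebra.comul ∘ₗ HopfAlgebra.antipode (R := R)) :=
        (conv_unit_left _).symm
    _ = conv (conv (antiComul (R := R) (A := A)) Coalgebra.comul)
          (Coalgebra.comul ∘ₗ HopfAlgebra.antipode (R := R)) := by rw [conv_antiComul_comul]
    _ = conv (antiComul (R := R) (A := A))
          (conv Coalgebra.comul (Coalgebra.comul ∘ₗ HopfAlgebra.antipode (R := R))) :=
        conv_assoc _ _ _
    _ = conv (antiComul (R := R) (A := A)) convUnit := by rw [conv_comul_antipode]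
    _ = antiComul := conv_unit_right _

lemma comul_antipode_repr {a : A} {ι : Type*} (r : Coalgebra.Repr R a ι) :
    Coalgebra.comul (R := R) (HopfAlgebra.antipode (R := R) a)
      = ∑ i ∈ r.index, HopfAlgebra.antipode (R := R) (r.right i) ⊗ₜ[R]
          HopfAlgebra.antipode (R := R) (r.left i) := by
  have h := LinearMap.congr_fun (comul_comp_antipode (R := R) (A := A)) a
  rw [LinearMap.comp_apply] at h
  rw [h, antiComul_repr r]

end Conv

end Aux


open TensorProduct

noncomputable section

variable {k P H : Type*} [Field k] [Ring P] [Ring H] [HopfAlgebra k P] [HopfAlgebra k H]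

/-- The right coaction `Δ_R = (id ⊗ π) ∘ Δ_P : P → P ⊗ H`. -/
noncomputable def deltaR (π : P →ₐc[k] H) : P →ₗ[k] P ⊗[k] H :=
  LinearMap.lTensor P π.toLinearMap ∘ₗ Coalgebra.comul

/-- The coinvariant subspace `M = {x ∈ P : Δ_R(x) = x ⊗ 1}` as a submodule. -/
noncomputable def coinvSub (π : P →ₐc[k] H) : Submodule k P :=
  LinearMap.ker (deltaR π - (TensorProduct.mk k P H).flip 1)

/-- `V = M ∩ ker ε_P`. -/
noncomputable def Vsub (π : P →ₐc[k] H) : Submodule k P :=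
  coinvSub π ⊓ LinearMap.ker (Coalgebra.counit (R := k) (A := P))

/-- `Δ_V(v) = Σ v₍₂₎ ⊗ π(S(v₍₁₎))`, as a map defined on all of `P`. -/
noncomputable def deltaV (π : P →ₐc[k] H) : P →ₗ[k] P ⊗[k] H :=
  (TensorProduct.comm k H P).toLinearMap
    ∘ₗ (π.toLinearMap ∘ₗ HopfAlgebra.antipode (R := k) (A := P)).rTensor P
    ∘ₗ Coalgebra.comul


section MainProof

open TensorProduct Coalgebra LinearMap

variable (π : P →ₐc[k] H)

@[simp] lemma bialgHom_toLinearMap_apply (x : P) : π.toLinearMap x = π x := rfl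

lemma deltaV_repr {y : P} {ι : Type*} (r : Coalgebra.Repr k y ι) :
    deltaV π y = ∑ i ∈ r.index,
      r.right i ⊗ₜ[k] π (HopfAlgebra.antipode (R := k) (r.left i)) := by
  simp only [deltaV, LinearMap.comp_apply, ← r.eq, map_sum, LinearMap.rTensor_tmul,
    LinearEquiv.coe_coe, TensorProduct.comm_tmul, bialgHom_toLinearMap_apply]

lemma mem_V_iff {v : P} (hv : v ∈ Vsub π) :
    (LinearMap.lTensor P π.toLinearMap) (Coalgebra.comul v) = v ⊗ₜ[k] 1
      ∧ Coalgebra.counit (R := k) v = 0 := by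
  obtain ⟨h1, h2⟩ := Submodule.mem_inf.mp hv
  refine ⟨?_, by simpa using h2⟩
  have h1' := h1
  rw [coinvSub, LinearMap.mem_ker, LinearMap.sub_apply, sub_eq_zero] at h1'
  simpa [deltaR] using h1'

lemma claim3 (v : P) :
    (TensorProduct.rid k P)
      ((Coalgebra.counit (R := k) (A := H)).lTensor P (deltaV π v)) = v := by
  rw [deltaV_repr π (ℛ k v), map_sum, map_sum]
  simp only [LinearMap.lTensor_tmul, TensorProduct.rid_tmul]
  calc ∑ i ∈ (ℛ k v).index, Coalgebra.counit (R := k)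
          (π (HopfAlgebra.antipode (R := k) ((ℛ k v).left i))) • (ℛ k v).right i
      = ∑ i ∈ (ℛ k v).index,
          Coalgebra.counit (R := k) ((ℛ k v).left i) • (ℛ k v).right i := by
        refine Finset.sum_congr rfl fun i _ => ?_
        rw [CoalgHomClass.counit_comp_apply, counit_antipode']
    _ = v := repr_smul_right _

lemma claim2 (v : P) :
    (TensorProduct.assoc k P H H) ((deltaV π).rTensor H (deltaV π v))
      = (Coalgebra.comul (R := k) (A := H)).lTensor P (deltaV π v) := by
  set r := ℛ k v with hrdef
  set b : (i : r.ι) → Coalgebra.Repr k (r.left i) (P × P) := fun i => ℛ k (r.left i) with hb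
  set a : (i : r.ι) → Coalgebra.Repr k (r.right i) (P × P) := fun i => ℛ k (r.right i) with ha
  have E := Coalgebra.sum_tmul_tmul_eq r b a
  have E2 := congrArg (LinearMap.lTensor P
      (TensorProduct.map (π.toLinearMap ∘ₗ HopfAlgebra.antipode (R := k))
        (π.toLinearMap ∘ₗ HopfAlgebra.antipode (R := k)))
    ∘ₗ (TensorProduct.assoc k P P P).toLinearMap
    ∘ₗ (TensorProduct.comm k P (P ⊗[k] P)).toLinearMap
    ∘ₗ LinearMap.lTensor P (TensorProduct.comm k P P).toLinearMap) E
  simp only [map_sum, LinearMap.comp_apply, LinearEquiv.coe_coe, LinearMap.lTensor_tmul,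
    TensorProduct.comm_tmul, TensorProduct.assoc_tmul, TensorProduct.map_tmul,
    bialgHom_toLinearMap_apply] at E2
  have hl : (TensorProduct.assoc k P H H) ((deltaV π).rTensor H (deltaV π v))
      = ∑ i ∈ r.index, ∑ j ∈ (a i).index, (a i).right j ⊗ₜ[k]
          (π (HopfAlgebra.antipode (R := k) ((a i).left j)) ⊗ₜ[k]
            π (HopfAlgebra.antipode (R := k) (r.left i))) := by
    rw [deltaV_repr π r, map_sum, map_sum]
    refine Finset.sum_congr rfl fun i _ => ?_
    rw [LinearMap.rTensor_tmul, deltaV_repr π (a i), TensorProduct.sum_tmul, map_sum]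
    exact Finset.sum_congr rfl fun j _ => TensorProduct.assoc_tmul _ _ _
  have hr : (Coalgebra.comul (R := k) (A := H)).lTensor P (deltaV π v)
      = ∑ i ∈ r.index, ∑ j ∈ (b i).index, r.right i ⊗ₜ[k]
          (π (HopfAlgebra.antipode (R := k) ((b i).right j)) ⊗ₜ[k]
            π (HopfAlgebra.antipode (R := k) ((b i).left j))) := by
    rw [deltaV_repr π r, map_sum]
    refine Finset.sum_congr rfl fun i _ => ?_
    rw [LinearMap.lTensor_tmul, ← CoalgHomClass.map_comp_comul_apply π,
      comul_antipode_repr (b i), map_sum, ← TensorProduct.tmul_sum]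
    congr 1
  rw [hl, hr, ← E2]

lemma claim1 (hS : ∀ x : P, π (HopfAlgebra.antipode (R := k) x)
      = HopfAlgebra.antipode (R := k) (π x)) (v : P) (hv : v ∈ Vsub π) :
    deltaV π v ∈ LinearMap.range (LinearMap.rTensor H (Vsub π).subtype) := by
  obtain ⟨hM, hE⟩ := mem_V_iff π hv
  set r := ℛ k v with hrdef
  set b : (i : r.ι) → Coalgebra.Repr k (r.left i) (P × P) := fun i => ℛ k (r.left i) with hb
  set a : (i : r.ι) → Coalgebra.Repr k (r.right i) (P × P) := fun i => ℛ k (r.right i) with ha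
  have hMr : ∑ i ∈ r.index, r.left i ⊗ₜ[k] π (r.right i) = v ⊗ₜ[k] (1 : H) := by
    rw [← r.eq, map_sum] at hM
    simpa only [LinearMap.lTensor_tmul, bialgHom_toLinearMap_apply] using hM
  have hπv : π v = 0 := by
    have h2 := congrArg ((TensorProduct.lid k H).toLinearMap
      ∘ₗ LinearMap.rTensor H (Coalgebra.counit (R := k) (A := P))) hMr
    simp only [map_sum, LinearMap.comp_apply, LinearEquiv.coe_coe, LinearMap.rTensor_tmul,
      TensorProduct.lid_tmul] at h2
    rw [hE, zero_smul] at h2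
    rw [← h2]
    calc π v
        = π (∑ i ∈ r.index, Coalgebra.counit (R := k) (r.left i) • r.right i) := by
          rw [repr_smul_right]
      _ = ∑ i ∈ r.index, Coalgebra.counit (R := k) (r.left i) • π (r.right i) := by
          rw [map_sum]; exact Finset.sum_congr rfl fun i _ => map_smul π _ _
  -- component 2
  have hc2 : ∑ i ∈ r.index, Coalgebra.counit (R := k) (r.right i) ⊗ₜ[k]
      π (HopfAlgebra.antipode (R := k) (r.left i)) = (0 : k ⊗[k] H) := by
    calc ∑ i ∈ r.index, Coalgebra.counit (R := k) (r.right i) ⊗ₜ[k]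
          π (HopfAlgebra.antipode (R := k) (r.left i))
        = ∑ i ∈ r.index, (1 : k) ⊗ₜ[k]
            π (HopfAlgebra.antipode (R := k)
              (Coalgebra.counit (R := k) (r.right i) • r.left i)) := by
          refine Finset.sum_congr rfl fun i _ => ?_
          rw [map_smul, map_smul, TensorProduct.tmul_smul, TensorProduct.smul_tmul',
            smul_eq_mul, mul_one]
      _ = (1 : k) ⊗ₜ[k] π (HopfAlgebra.antipode (R := k)
            (∑ i ∈ r.index, Coalgebra.counit (R := k) (r.right i) • r.left i)) := by
          rw [← TensorProduct.tmul_sum, ← map_sum, ← map_sum]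
      _ = 0 := by rw [repr_smul_left, hS, hπv, map_zero, TensorProduct.tmul_zero]
  -- component 1
  have hc1 : ∑ i ∈ r.index,
      ((LinearMap.lTensor P π.toLinearMap) (Coalgebra.comul (r.right i))) ⊗ₜ[k]
        π (HopfAlgebra.antipode (R := k) (r.left i))
      = ∑ i ∈ r.index, (r.right i ⊗ₜ[k] (1 : H)) ⊗ₜ[k]
          π (HopfAlgebra.antipode (R := k) (r.left i)) := by
    have E := Coalgebra.sum_tmul_tmul_eq r b a
    have E4 := congrArg (LinearMap.lTensor (P ⊗[k] H)
        (π.toLinearMap ∘ₗ HopfAlgebra.antipode (R := k))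
      ∘ₗ (TensorProduct.comm k P (P ⊗[k] H)).toLinearMap
      ∘ₗ LinearMap.lTensor P (LinearMap.lTensor P π.toLinearMap)) E
    simp only [map_sum, LinearMap.comp_apply, LinearEquiv.coe_coe, LinearMap.lTensor_tmul,
      TensorProduct.comm_tmul, bialgHom_toLinearMap_apply] at E4
    have K := congrArg (LinearMap.rTensor H (Coalgebra.comul (R := k) (A := P))) hMr
    rw [map_sum] at K
    simp only [LinearMap.rTensor_tmul] at K
    have K2 : ∑ i ∈ r.index, ∑ j ∈ (b i).index,
        (((b i).left j ⊗ₜ[k] (b i).right j) ⊗ₜ[k] π (r.right i))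
        = ∑ i ∈ r.index, (r.left i ⊗ₜ[k] r.right i) ⊗ₜ[k] (1 : H) := by
      calc ∑ i ∈ r.index, ∑ j ∈ (b i).index,
            (((b i).left j ⊗ₜ[k] (b i).right j) ⊗ₜ[k] π (r.right i))
          = ∑ i ∈ r.index, (Coalgebra.comul (r.left i)) ⊗ₜ[k] π (r.right i) := by
            refine Finset.sum_congr rfl fun i _ => ?_
            rw [← (b i).eq, TensorProduct.sum_tmul]
        _ = (Coalgebra.comul v) ⊗ₜ[k] (1 : H) := K
        _ = ∑ i ∈ r.index, (r.left i ⊗ₜ[k] r.right i) ⊗ₜ[k] (1 : H) := by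
            rw [← r.eq, TensorProduct.sum_tmul]
    have E5 := congrArg (LinearMap.lTensor (P ⊗[k] H)
        (π.toLinearMap ∘ₗ HopfAlgebra.antipode (R := k))
      ∘ₗ (TensorProduct.comm k P (P ⊗[k] H)).toLinearMap
      ∘ₗ (TensorProduct.assoc k P P H).toLinearMap) K2
    simp only [map_sum, LinearMap.comp_apply, LinearEquiv.coe_coe, TensorProduct.assoc_tmul,
      TensorProduct.comm_tmul, LinearMap.lTensor_tmul, bialgHom_toLinearMap_apply] at E5
    calc ∑ i ∈ r.index,
          ((LinearMap.lTensor P π.toLinearMap) (Coalgebra.comul (r.right i))) ⊗ₜ[k]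
            π (HopfAlgebra.antipode (R := k) (r.left i))
        = ∑ i ∈ r.index, ∑ j ∈ (a i).index,
            ((a i).left j ⊗ₜ[k] π ((a i).right j)) ⊗ₜ[k]
              π (HopfAlgebra.antipode (R := k) (r.left i)) := by
          refine Finset.sum_congr rfl fun i _ => ?_
          rw [← (a i).eq, map_sum, TensorProduct.sum_tmul]
          exact Finset.sum_congr rfl fun j _ => by
            rw [LinearMap.lTensor_tmul]
            rfl
      _ = ∑ i ∈ r.index, ∑ j ∈ (b i).index,
            ((b i).right j ⊗ₜ[k] π (r.right i)) ⊗ₜ[k]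
              π (HopfAlgebra.antipode (R := k) ((b i).left j)) := E4.symm
      _ = ∑ i ∈ r.index, (r.right i ⊗ₜ[k] (1 : H)) ⊗ₜ[k]
            π (HopfAlgebra.antipode (R := k) (r.left i)) := E5
  -- exactness
  have hker : LinearMap.ker ((deltaR π - (TensorProduct.mk k P H).flip 1).prod
      (Coalgebra.counit (R := k) (A := P))) = Vsub π := by
    rw [LinearMap.ker_prod]; rfl
  have hexact : Function.Exact ((Vsub π).subtype)
      ((deltaR π - (TensorProduct.mk k P H).flip 1).prod
        (Coalgebra.counit (R := k) (A := P))) := by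
    rw [LinearMap.exact_iff, Submodule.range_subtype, hker]
  have hex2 := Module.Flat.rTensor_exact H hexact
  have hzero : (LinearMap.rTensor H ((deltaR π - (TensorProduct.mk k P H).flip 1).prod
      (Coalgebra.counit (R := k) (A := P)))) (deltaV π v) = 0 := by
    rw [deltaV_repr π r, map_sum]
    simp only [LinearMap.rTensor_tmul, LinearMap.prod_apply, Function.prod]
    rw [← LinearEquiv.map_eq_zero_iff (TensorProduct.prodLeft k k (P ⊗[k] H) k H), map_sum]
    simp only [TensorProduct.prodLeft_tmul]
    rw [Prod.ext_iff]
    constructor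
    · rw [Prod.fst_sum]
      simp only [Prod.fst_zero]
      calc ∑ i ∈ r.index, ((deltaR π - (TensorProduct.mk k P H).flip 1) (r.right i)) ⊗ₜ[k]
            π (HopfAlgebra.antipode (R := k) (r.left i))
          = ∑ i ∈ r.index,
              (((LinearMap.lTensor P π.toLinearMap) (Coalgebra.comul (r.right i))) ⊗ₜ[k]
                π (HopfAlgebra.antipode (R := k) (r.left i))
              - (r.right i ⊗ₜ[k] (1 : H)) ⊗ₜ[k]
                π (HopfAlgebra.antipode (R := k) (r.left i))) := by
            refine Finset.sum_congr rfl fun i _ => ?_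
            rw [LinearMap.sub_apply, TensorProduct.sub_tmul]
            rfl
        _ = 0 := by rw [Finset.sum_sub_distrib, hc1, sub_self]
    · rw [Prod.snd_sum]
      simp only [Prod.snd_zero]
      exact hc2
  obtain ⟨w, hw⟩ := (hex2 (deltaV π v)).mp hzero
  exact ⟨w, hw⟩

end MainProof

/-- `Δ_V(v) = Σ v₍₂₎ ⊗ π(S(v₍₁₎))` maps `V = M ∩ ker ε` into `V ⊗ H` and makes
`V` a right `H`-comodule: `(Δ_V ⊗ id) ∘ Δ_V = (id ⊗ Δ_H) ∘ Δ_V` and `(id ⊗ ε_H) ∘ Δ_V = id`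
on `V`. -/
theorem statement12 (π : P →ₐc[k] H) (hsurj : Function.Surjective π)
    (hS : ∀ x : P, π (HopfAlgebra.antipode (R := k) x)
      = HopfAlgebra.antipode (R := k) (π x)) :
    (∀ v ∈ Vsub π, deltaV π v ∈ LinearMap.range (LinearMap.rTensor H (Vsub π).subtype))
    ∧ (∀ v ∈ Vsub π,
        (TensorProduct.assoc k P H H) ((deltaV π).rTensor H (deltaV π v))
          = (Coalgebra.comul (R := k) (A := H)).lTensor P (deltaV π v))
    ∧ (∀ v ∈ Vsub π,
        (TensorProduct.rid k P)
          ((Coalgebra.counit (R := k) (A := H)).lTensor P (deltaV π v)) = v) := by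
  exact ⟨claim1 π hS, fun v _ => claim2 π v, fun v _ => claim3 π v⟩
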